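/- Let q = p^k with p prime and k ≥ 1, let b ∈ F_q, and define f_b : F_q → F_q by f_b(x) = x^p + b. For any integer m ≥ 1, if there exists at least one x ∈ F_q with f_b^{(m)}(x) = x, then the set {x ∈ F_q : f_b^{(m)}(x) = x} has exactly p^{gcd(m,k)} elements. -/

import Mathlib

open Polynomial

theorem stmt18 {F : Type*} [Field F] [Fintype F] (p k : ℕ) [Fact p.Prime] (hk : 1 ≤ k)
    (hq : Fintype.card F = p ^ k) (b : F) (m : ℕ) (hm : 1 ≤ m)
    (hex : ∃ x : F, (fun y : F => y ^ p + b)^[m] x = x) :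
    {x : F | (fun y : F => y ^ p + b)^[m] x = x}.ncard = p ^ Nat.gcd m k := by
  classical
  have hp : p.Prime := Fact.out
  -- characteristic
  haveI hchar : CharP F p := by
    haveI := ringChar.charP F
    obtain ⟨n, hr, hn⟩ := FiniteField.card F (ringChar F)
    have hpr : p = ringChar F := by
      have h1 : p ∣ (ringChar F) ^ (n : ℕ) := by
        rw [← hn, hq]; exact dvd_pow_self p (by omega)
      have h2 : p ∣ ringChar F := hp.dvd_of_dvd_pow h1
      exact ((Nat.prime_dvd_prime_iff_eq hp hr).mp h2)
    rw [hpr]; exact ringChar.charP F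
  set f : F → F := fun y : F => y ^ p + b with hf
  -- key difference identity
  have key : ∀ (n : ℕ) (x y : F), f^[n] x - f^[n] y = (x - y) ^ p ^ n := by
    intro n
    induction n with
    | zero => intro x y; simp
    | succ n ih =>
      intro x y
      rw [Function.iterate_succ_apply, Function.iterate_succ_apply, ih]
      have : f x - f y = (x - y) ^ p := by
        simp only [hf]
        rw [sub_pow_char]
        ring
      rw [this, ← pow_mul, pow_succ']
  obtain ⟨x0, hx0⟩ := hex
  -- step lemma: z^(p^n) = z → z^(p^(n*t)) = z
  have stepmul : ∀ (z : F) (n t : ℕ), z ^ p ^ n = z → z ^ p ^ (n * t) = z := by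
    intro z n t hz
    induction t with
    | zero => simp
    | succ t ih =>
      rw [Nat.mul_succ, pow_add, pow_mul, ih, hz]
  have pow_card' : ∀ z : F, z ^ p ^ k = z := by
    intro z; rw [← hq]; exact FiniteField.pow_card z
  set g := Nat.gcd m k with hg
  -- set equality of fixed sets
  have Tg : {x : F | f^[m] x = x} = (fun z => z + x0) '' {z : F | z ^ p ^ g = z} := by
    ext x
    simp only [Set.mem_setOf_eq, Set.mem_image]
    constructor
    · intro hx
      refine ⟨x - x0, ?_, by ring⟩
      have hzm : (x - x0) ^ p ^ m = x - x0 := by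
        rw [← key m x x0, hx, hx0]
      -- gcd argument
      have gcd_lemma : ∀ a b' : ℕ, ∀ z : F, z ^ p ^ a = z → z ^ p ^ b' = z →
          z ^ p ^ Nat.gcd a b' = z := by
        intro a b' z
        induction a, b' using Nat.gcd.induction generalizing z with
        | H0 n => intro _ h2; simpa using h2
        | H1 a b' ha ih =>
          intro h1 h2
          rw [Nat.gcd_rec]
          apply ih
          · have := stepmul z a (b' / a) h1
            calc z ^ p ^ (b' % a) = (z ^ p ^ (a * (b' / a))) ^ p ^ (b' % a) := by rw [this]
              _ = z ^ p ^ (a * (b' / a) + b' % a) := by rw [pow_add, pow_mul, pow_mul]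
              _ = z := by rw [Nat.div_add_mod]; exact h2
          · exact h1
      exact gcd_lemma m k (x - x0) hzm (pow_card' (x - x0))
    · rintro ⟨z, hz, rfl⟩
      have hzm : z ^ p ^ m = z := by
        have := stepmul z g (m / g) hz
        rwa [Nat.mul_div_cancel' (Nat.gcd_dvd_left m k)] at this
      have : f^[m] (z + x0) - f^[m] x0 = (z + x0 - x0) ^ p ^ m := key m (z + x0) x0
      rw [hx0, add_sub_cancel_right, hzm] at this
      linear_combination this
  rw [Tg, Set.ncard_image_of_injective _ (add_left_injective x0)]
  -- now count {z | z ^ p ^ g = z}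
  have hg1 : 1 ≤ g := Nat.gcd_pos_of_pos_left k hm
  have hgk : g ∣ k := Nat.gcd_dvd_right m k
  have hp1 : 1 < p := hp.one_lt
  have hQk_splits : Splits (X ^ p ^ k - X : F[X]) := by
    rw [splits_iff_card_roots]
    have h1 : roots (X ^ p ^ k - X : F[X]) = Finset.univ.val := by
      have := FiniteField.roots_X_pow_card_sub_X F
      rwa [hq] at this
    rw [h1, FiniteField.X_pow_card_pow_sub_X_natDegree_eq F (by omega) hp1]
    simpa using hq
  have hdvd : (X ^ p ^ g - X : F[X]) ∣ (X ^ p ^ k - X : F[X]) := by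
    have h1 : (X : F[X]) ^ p ^ g - X = X * (X ^ (p ^ g - 1) - 1) := by
      rw [mul_sub, mul_one, ← pow_succ']
      congr 2
      have : 1 ≤ p ^ g := Nat.one_le_pow _ _ (by omega)
      omega
    have h2 : (X : F[X]) ^ p ^ k - X = X * (X ^ (p ^ k - 1) - 1) := by
      rw [mul_sub, mul_one, ← pow_succ']
      congr 2
      have : 1 ≤ p ^ k := Nat.one_le_pow _ _ (by omega)
      omega
    rw [h1, h2]
    apply mul_dvd_mul_left
    have hdd : (p ^ g - 1) ∣ (p ^ k - 1) := by
      obtain ⟨t, ht⟩ := hgk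
      rw [ht, pow_mul]
      simpa using Nat.sub_dvd_pow_sub_pow (p ^ g) 1 t
    obtain ⟨s, hs⟩ := hdd
    rw [hs, pow_mul]
    simpa using sub_dvd_pow_sub_pow ((X : F[X]) ^ (p ^ g - 1)) 1 s
  have hsep : Separable (X ^ p ^ g - X : F[X]) :=
    galois_poly_separable p (p ^ g) (dvd_pow dvd_rfl (by omega))
  have hsplits : Splits ((X ^ p ^ g - X : F[X]).map (algebraMap F F)) := by
    rw [Algebra.algebraMap_self, Polynomial.map_id]
    exact hQk_splits.of_dvd (FiniteField.X_pow_card_pow_sub_X_ne_zero F (by omega) hp1) hdvd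
  have hcard := card_rootSet_eq_natDegree hsep hsplits
  rw [FiniteField.X_pow_card_pow_sub_X_natDegree_eq F (by omega) hp1] at hcard
  have hset : {z : F | z ^ p ^ g = z} = (X ^ p ^ g - X : F[X]).rootSet F := by
    ext z
    rw [Set.mem_setOf_eq, mem_rootSet]
    constructor
    · intro h
      refine ⟨FiniteField.X_pow_card_pow_sub_X_ne_zero F (by omega) hp1, ?_⟩
      simp [h]
    · intro ⟨_, h⟩
      simp only [map_sub, map_pow, aeval_X, sub_eq_zero] at h
      exact h
  rw [hset, Set.ncard_eq_toFinset_card', Set.toFinset_card, hcard]
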